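/- For every n and σ with σ = Θ(n), there exists a forward trie with n nodes whose CDAWG has at least σ(n − σ − 2) = Ω(n²) edges, while its number of nodes is at most 2n − 3. -/

import Mathlib

/-- A rooted labeled tree on `n` nodes: node `0` is the root, every non-root
node `v` has a parent with smaller index, and `label v` is the character on
the edge between `v` and its parent. -/
structure LTree (n : ℕ) (A : Type*) where
  parent : Fin n → Fin n
  label : Fin n → A
  hp : ∀ v : Fin n, v.val ≠ 0 → (parent v).val < v.val

namespace LTree

variable {n : ℕ} {A : Type*}

/-- The string spelled by the path from node `v` up to the root
(read in the leaf-to-root direction). -/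
def strUp (T : LTree n A) (v : Fin n) : List A :=
  if h : v.val = 0 then []
  else T.label v :: T.strUp (T.parent v)
termination_by v.val
decreasing_by exact T.hp v h

/-- Substrings of the backward trie: strings spelled by upward paths from a
node to one of its ancestors (prefixes of the upward root-paths). -/
def SubstrU (T : LTree n A) : Set (List A) :=
  { s | ∃ (v : Fin n) (m : ℕ), s = (T.strUp v).take m }

/-- Substrings of the forward trie: strings spelled by downward paths from a
node to one of its descendants. -/
def SubstrD (T : LTree n A) : Set (List A) :=
  { s | ∃ (v : Fin n) (m : ℕ), s = ((T.strUp v).take m).reverse }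

/-- A node is a leaf if no (non-root) node has it as parent. -/
def isLeaf (T : LTree n A) (v : Fin n) : Prop :=
  ∀ u : Fin n, u.val ≠ 0 → T.parent u ≠ v

/-- Suffixes of the forward trie: strings spelled by downward paths from any
node to a leaf below it. -/
def SuffixF (T : LTree n A) : Set (List A) :=
  { s | ∃ v : Fin n, T.isLeaf v ∧ ∃ m : ℕ, s = ((T.strUp v).take m).reverse }

/-- Suffixes of the backward trie: strings spelled by the paths from any
non-root node up to the root. -/
def SuffixB (T : LTree n A) : Set (List A) :=
  { s | ∃ v : Fin n, v.val ≠ 0 ∧ s = T.strUp v }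

/-- The trie condition: out-going edges of each node (equivalently, edges to
the children of each node) carry mutually distinct characters. -/
def isTrie (T : LTree n A) : Prop :=
  ∀ u v : Fin n, u.val ≠ 0 → v.val ≠ 0 →
    T.parent u = T.parent v → T.label u = T.label v → u = v

/-- `X` is right-maximal on the forward trie: it has two distinct right
extensions, or an occurrence ending at a leaf. -/
def rightMaximalF (T : LTree n A) (X : List A) : Prop :=
  (∃ a b : A, a ≠ b ∧ X ++ [a] ∈ T.SubstrD ∧ X ++ [b] ∈ T.SubstrD) ∨
  (∃ v : Fin n, T.isLeaf v ∧ ∃ m : ℕ, X = ((T.strUp v).take m).reverse)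

/-- `X` is left-maximal on the forward trie: it has two distinct left
extensions, or an occurrence beginning at the root. -/
def leftMaximalF (T : LTree n A) (X : List A) : Prop :=
  (∃ a b : A, a ≠ b ∧ (a :: X) ∈ T.SubstrD ∧ (b :: X) ∈ T.SubstrD) ∨
  (∃ v : Fin n, X = (T.strUp v).reverse)

/-- `Y` is left-maximal on the backward trie: two distinct left extensions,
or an occurrence beginning at a leaf. -/
def leftMaximalB (T : LTree n A) (Y : List A) : Prop :=
  (∃ a b : A, a ≠ b ∧ (a :: Y) ∈ T.SubstrU ∧ (b :: Y) ∈ T.SubstrU) ∨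
  (∃ v : Fin n, T.isLeaf v ∧ ∃ m : ℕ, Y = (T.strUp v).take m)

/-- `Y` is right-maximal on the backward trie: two distinct right extensions,
or an occurrence ending at the root. -/
def rightMaximalB (T : LTree n A) (Y : List A) : Prop :=
  (∃ a b : A, a ≠ b ∧ Y ++ [a] ∈ T.SubstrU ∧ Y ++ [b] ∈ T.SubstrU) ∨
  (∃ v : Fin n, Y = T.strUp v)

end LTree

namespace Broom

variable {n σ : ℕ}

/-- The broom trie: root `0`, a path `1, …, n-σ-1` of `a`-edges (label `0`),
and `σ` leaves `n-σ, …, n-1` attached to node `n-σ-1` with distinct labels. -/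
def broom (n σ : ℕ) (hn : σ + 3 ≤ n) : LTree n (Fin (σ + 1)) where
  parent v := if v.val ≤ n - σ - 1 then ⟨v.val - 1, by have := v.2; omega⟩
    else ⟨n - σ - 1, by omega⟩
  label v := if v.val ≤ n - σ - 1 then 0
    else ⟨v.val - (n - σ - 1), by have := v.2; omega⟩
  hp v hv := by
    split
    · simpa using by omega
    · simp only [not_le] at *
      simpa using by omega

theorem strUp_path (hn : σ + 3 ≤ n) (k : ℕ) (hk : k ≤ n - σ - 1) :
    (broom n σ hn).strUp ⟨k, by omega⟩ = List.replicate k 0 := by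
  induction k with
  | zero => rw [LTree.strUp]; simp
  | succ k ih =>
      rw [LTree.strUp]
      have hk' : k ≤ n - σ - 1 := by omega
      have h1 : ((broom n σ hn).parent ⟨k + 1, by omega⟩) = ⟨k, by omega⟩ := by
        simp only [broom, if_pos hk]
        simp [Fin.ext_iff]
      have h2 : ((broom n σ hn).label ⟨k + 1, by omega⟩) = 0 := by
        simp only [broom, if_pos hk]
      simp only [h1, h2, ih hk']
      simp [List.replicate_succ]

theorem strUp_leaf (hn : σ + 3 ≤ n) (k : ℕ) (hk1 : n - σ - 1 < k) (hk2 : k < n) :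
    (broom n σ hn).strUp ⟨k, hk2⟩ =
      (⟨k - (n - σ - 1), by omega⟩ : Fin (σ + 1)) :: List.replicate (n - σ - 1) 0 := by
  rw [LTree.strUp]
  have h1 : ((broom n σ hn).parent ⟨k, hk2⟩) = ⟨n - σ - 1, by omega⟩ := by
    simp only [broom, if_neg (by omega : ¬ k ≤ n - σ - 1)]
  have h2 : ((broom n σ hn).label ⟨k, hk2⟩) =
      (⟨k - (n - σ - 1), by omega⟩ : Fin (σ + 1)) := by
    simp only [broom, if_neg (by omega : ¬ k ≤ n - σ - 1)]
  have h3 := strUp_path hn (n - σ - 1) le_rfl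
  rw [dif_neg (show ¬ (k = 0) by omega)]
  rw [h1, h2, h3]

theorem mem_substrD (hn : σ + 3 ≤ n) (X : List (Fin (σ + 1))) :
    X ∈ (broom n σ hn).SubstrD ↔
      (∃ j ≤ n - σ - 1, X = List.replicate j 0) ∨
      (∃ j ≤ n - σ - 1, ∃ c : Fin (σ + 1), c ≠ 0 ∧ X = List.replicate j 0 ++ [c]) := by
  constructor
  · rintro ⟨v, m', rfl⟩
    by_cases hv : v.val ≤ n - σ - 1
    · left
      refine ⟨min m' v.val, by omega, ?_⟩
      have : v = ⟨v.val, v.2⟩ := rfl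
      rw [this, strUp_path hn v.val hv, List.take_replicate, List.reverse_replicate]
    · push_neg at hv
      have : v = ⟨v.val, v.2⟩ := rfl
      rw [this, strUp_leaf hn v.val hv v.2]
      rcases m' with _ | m''
      · left; exact ⟨0, by omega, by simp⟩
      · right
        refine ⟨min m'' (n - σ - 1), by omega, ⟨v.val - (n - σ - 1), by omega⟩, ?_, ?_⟩
        · have : v.val - (n - σ - 1) ≠ 0 := by omega
          simp [Fin.ext_iff, this]
        · simp [List.take_replicate, List.reverse_replicate]
  · rintro (⟨j, hj, rfl⟩ | ⟨j, hj, c, hc, rfl⟩)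
    · exact ⟨⟨j, by omega⟩, j, by
        rw [strUp_path hn j hj]
        simp [List.take_replicate, List.reverse_replicate, Nat.min_self]⟩
    · have hcv : c.val ≠ 0 := fun h => hc (Fin.ext (by rw [h, Fin.val_zero]))
      have hcσ : c.val < σ + 1 := c.2
      refine ⟨⟨n - σ - 1 + c.val, by omega⟩, j + 1, ?_⟩
      rw [strUp_leaf hn (n - σ - 1 + c.val) (by omega) (by omega)]
      have : (⟨n - σ - 1 + c.val - (n - σ - 1), by omega⟩ : Fin (σ + 1)) = c := by
        simp [Fin.ext_iff]
      rw [this]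
      simp [List.take_replicate, List.reverse_replicate, Nat.min_eq_left hj]

/-- Every string of the broom forward trie consists of `0`s except possibly a
final nonzero character; in particular any left extension character is `0`. -/
theorem cons_mem_substrD (hn : σ + 3 ≤ n) (d : Fin (σ + 1)) (j : ℕ)
    (c : Fin (σ + 1)) (hc : c ≠ 0)
    (h : d :: (List.replicate j 0 ++ [c]) ∈ (broom n σ hn).SubstrD) : d = 0 := by
  rw [mem_substrD] at h
  rcases h with ⟨j', hj', he⟩ | ⟨j', hj', c', hc', he⟩
  · exfalso
    apply hc
    have : c ∈ List.replicate j' (0 : Fin (σ + 1)) := by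
      rw [← he]; simp
    exact List.eq_of_mem_replicate this
  · rcases j' with _ | j''
    · simp at he
    · rw [List.replicate_succ, List.cons_append] at he
      injection he with h _

end Broom

/-- for every `n` and `σ` with `3 ≤ σ ≤ n - 3` (in particular
`σ = Θ(n)`), there is a forward trie with `n` nodes (the broom) whose CDAWG
has at least `σ(n - σ - 2)` edges, while its number of nodes (maximal
substrings) is at most `2n - 3`. -/
theorem stmt15 :
    ∀ n σ : ℕ, 3 ≤ σ → σ ≤ n - 3 →
      ∃ T : LTree n (Fin (σ + 1)), T.isTrie ∧
        σ * (n - σ - 2) ≤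
          {p : List (Fin (σ + 1)) × Fin (σ + 1) |
            p.1 ∈ T.SubstrD ∧ T.leftMaximalF p.1 ∧ T.rightMaximalF p.1 ∧
            p.1 ++ [p.2] ∈ T.SubstrD}.ncard ∧
        {X | X ∈ T.SubstrD ∧ T.leftMaximalF X ∧
          T.rightMaximalF X}.ncard ≤ 2 * n - 3 := by
  intro n σ hσ hnσ
  have hn : σ + 3 ≤ n := by omega
  refine ⟨Broom.broom n σ hn, ?_, ?_, ?_⟩
  · -- the broom is a trie
    intro u v hu hv hpar hlab
    have hu2 := u.2; have hv2 := v.2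
    simp only [Broom.broom] at hpar hlab
    rcases le_or_gt u.val (n - σ - 1) with h1 | h1 <;>
        rcases le_or_gt v.val (n - σ - 1) with h2 | h2
    · rw [if_pos h1, if_pos h2] at hpar
      have := congrArg Fin.val hpar
      simp only [] at this
      exact Fin.ext (by omega)
    · rw [if_pos h1, if_neg (not_le.mpr h2)] at hlab
      have := congrArg Fin.val hlab
      simp only [Fin.val_zero] at this
      omega
    · rw [if_neg (not_le.mpr h1), if_pos h2] at hlab
      have := congrArg Fin.val hlab
      simp only [Fin.val_zero] at this
      omega
    · rw [if_neg (not_le.mpr h1), if_neg (not_le.mpr h2)] at hlab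
      have := congrArg Fin.val hlab
      simp only [] at this
      exact Fin.ext (by omega)
  · -- lower bound on the number of edges
    set T := Broom.broom n σ hn with hT
    set S := {p : List (Fin (σ + 1)) × Fin (σ + 1) |
        p.1 ∈ T.SubstrD ∧ T.leftMaximalF p.1 ∧ T.rightMaximalF p.1 ∧
        p.1 ++ [p.2] ∈ T.SubstrD} with hS
    have hSfin : S.Finite := by
      apply Set.Finite.subset
        ((List.finite_length_le (Fin (σ + 1)) n).prod Set.finite_univ)
      rintro ⟨X, c⟩ ⟨hX, -, -, -⟩
      rw [Broom.mem_substrD] at hX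
      constructor
      · rcases hX with ⟨j, hj, rfl⟩ | ⟨j, hj, c', hc', rfl⟩ <;>
          simp <;> omega
      · exact Set.mem_univ _
    set f : Fin (n - σ - 1 + 1) × Fin σ → List (Fin (σ + 1)) × Fin (σ + 1) :=
      fun p => (List.replicate p.1.val 0, ⟨p.2.val + 1, by have := p.2.2; omega⟩) with hf
    have hinj : Function.Injective f := by
      rintro ⟨k₁, i₁⟩ ⟨k₂, i₂⟩ h
      have hl : k₁.val = k₂.val := by
        have := congrArg (fun q : List (Fin (σ + 1)) × Fin (σ + 1) => q.1.length) h
        simpa [hf] using this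
      have hi : i₁.val + 1 = i₂.val + 1 :=
        congrArg (fun q : List (Fin (σ + 1)) × Fin (σ + 1) => q.2.val) h
      simp only [Prod.mk.injEq]
      exact ⟨Fin.ext hl, Fin.ext (by omega)⟩
    have hzero : ∀ k : ℕ, k ≤ n - σ - 1 →
        List.replicate k (0 : Fin (σ + 1)) ∈ T.SubstrD ∧
        T.leftMaximalF (List.replicate k 0) ∧
        T.rightMaximalF (List.replicate k 0) := by
      intro k hk
      refine ⟨?_, ?_, ?_⟩
      · rw [Broom.mem_substrD]; exact Or.inl ⟨k, hk, rfl⟩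
      · right
        exact ⟨⟨k, by omega⟩, by
          rw [Broom.strUp_path hn k hk, List.reverse_replicate]⟩
      · left
        refine ⟨⟨1, by omega⟩, ⟨2, by omega⟩, by simp [Fin.ext_iff], ?_, ?_⟩ <;>
          · rw [Broom.mem_substrD]
            exact Or.inr ⟨k, hk, _, by simp [Fin.ext_iff], rfl⟩
    have hrange : Set.range f ⊆ S := by
      rintro p ⟨⟨k, i⟩, rfl⟩
      have hk : k.val ≤ n - σ - 1 := by have := k.2; omega
      obtain ⟨hm, hl, hr⟩ := hzero k.val hk
      refine ⟨hm, hl, hr, ?_⟩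
      rw [Broom.mem_substrD]
      exact Or.inr ⟨k.val, hk, _, by
        intro h; have := congrArg Fin.val h; rw [Fin.val_zero] at this
        exact Nat.succ_ne_zero _ this, rfl⟩
    have hcard : (Set.range f).ncard = (n - σ - 1 + 1) * σ := by
      rw [← Set.image_univ, Set.ncard_image_of_injective _ hinj, Set.ncard_univ]
      simp [Nat.card_prod]
    calc σ * (n - σ - 2) ≤ (n - σ - 1 + 1) * σ := by
          rw [mul_comm]
          exact Nat.mul_le_mul (by omega) (le_refl σ)
      _ = (Set.range f).ncard := hcard.symm
      _ ≤ S.ncard := Set.ncard_le_ncard hrange hSfin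
  · -- upper bound on the number of nodes
    set T := Broom.broom n σ hn with hT
    set g : Fin (n - σ - 1 + 1) ⊕ Fin σ → List (Fin (σ + 1)) := fun x =>
      match x with
      | Sum.inl j => List.replicate j.val 0
      | Sum.inr i => List.replicate (n - σ - 1) 0 ++
          [(⟨i.val + 1, by have := i.2; omega⟩ : Fin (σ + 1))] with hg
    have hsub : {X | X ∈ T.SubstrD ∧ T.leftMaximalF X ∧ T.rightMaximalF X} ⊆
        Set.range g := by
      rintro X ⟨hX, hl, -⟩
      rw [Broom.mem_substrD] at hX
      rcases hX with ⟨j, hj, rfl⟩ | ⟨j, hj, c, hc, rfl⟩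
      · exact ⟨Sum.inl ⟨j, by omega⟩, rfl⟩
      · rcases hl with ⟨a, b, hab, ha, hb⟩ | ⟨v, hv⟩
        · exact absurd (by
            rw [Broom.cons_mem_substrD hn a j c hc ha,
              Broom.cons_mem_substrD hn b j c hc hb]) hab
        · by_cases hvm : v.val ≤ n - σ - 1
          · exfalso
            have : v = ⟨v.val, v.2⟩ := rfl
            rw [this, Broom.strUp_path hn v.val hvm, List.reverse_replicate] at hv
            exact hc (List.eq_of_mem_replicate (by rw [← hv]; simp))
          · push_neg at hvm
            have hv2 := v.2
            have : v = ⟨v.val, v.2⟩ := rfl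
            rw [this, Broom.strUp_leaf hn v.val hvm v.2] at hv
            simp only [List.reverse_cons, List.reverse_replicate] at hv
            refine ⟨Sum.inr ⟨v.val - (n - σ - 1) - 1, by omega⟩, ?_⟩
            have hlen := congrArg List.length hv
            simp only [List.length_append, List.length_replicate,
              List.length_cons, List.length_singleton] at hlen
            have hjm : j = n - σ - 1 := by omega
            subst hjm
            rw [hv]
            simp only [hg, List.append_cancel_left_eq, List.cons.injEq]
            refine ⟨?_, trivial⟩
            apply Fin.ext
            show v.val - (n - σ - 1) - 1 + 1 = v.val - (n - σ - 1)
            omega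
    have hfin : (Set.range g).Finite := Set.finite_range g
    calc {X | X ∈ T.SubstrD ∧ T.leftMaximalF X ∧ T.rightMaximalF X}.ncard
        ≤ (Set.range g).ncard := Set.ncard_le_ncard hsub hfin
      _ ≤ (Set.univ : Set (Fin (n - σ - 1 + 1) ⊕ Fin σ)).ncard := by
          rw [← Set.image_univ]
          exact Set.ncard_image_le Set.finite_univ
      _ ≤ 2 * n - 3 := by
          rw [Set.ncard_univ]
          simp only [Nat.card_eq_fintype_card, Fintype.card_sum, Fintype.card_fin]
          omega
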